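/- arXiv:2310.04775 — 2 statements merged into one kernel-verified Lean document; each statement's English description precedes it below -/
import Mathlib

section
/- Let P be a probability measure on [q_min, q_max] with standard deviation exactly (q_max − q_min)/2. Then P = (1/2)δ_{q_min} + (1/2)δ_{q_max}, i.e., P assigns mass 1/2 to each endpoint. -/
open MeasureTheory
set_option maxHeartbeats 1000000

/-- A probability measure giving full mass to a point is the Dirac measure. -/
lemma prob_eq_dirac_of_singleton (P : Measure ℝ) [IsProbabilityMeasure P] (x : ℝ)
    (hx : P {x} = 1) : P = Measure.dirac x := by
  classical
  have hcompl : P ({x} : Set ℝ)ᶜ = 0 := by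
    rw [measure_compl (measurableSet_singleton x) (measure_ne_top _ _), hx, measure_univ]
    simp
  ext s hs
  rw [Measure.dirac_apply' _ hs]
  by_cases hxs : x ∈ s
  · have h1 : P s ≤ 1 := prob_le_one
    have h2 : (1 : ENNReal) ≤ P s := by
      calc (1 : ENNReal) = P {x} := hx.symm
        _ ≤ P s := measure_mono (Set.singleton_subset_iff.mpr hxs)
    simp [Set.indicator_apply, hxs, le_antisymm h1 h2]
  · have hle0 : P s ≤ 0 := by
      calc P s ≤ P ({x} : Set ℝ)ᶜ := measure_mono (fun q hq => by
        simp only [Set.mem_compl_iff, Set.mem_singleton_iff]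
        rintro rfl; exact hxs hq)
        _ = 0 := hcompl
    simp [Set.indicator_apply, hxs, le_antisymm hle0 zero_le]

/-- A measure supported on two points is a combination of Dirac measures. -/
lemma meas_eq_two_point (P : Measure ℝ) (x y : ℝ) (hxy : x ≠ y)
    (h0 : P ({x, y} : Set ℝ)ᶜ = 0) :
    P = P {x} • Measure.dirac x + P {y} • Measure.dirac y := by
  classical
  have hmeas : MeasurableSet ({x, y} : Set ℝ) := (measurableSet_singleton y).insert x
  ext s hs
  have hdiff : P (s \ {x, y}) = 0 :=
    measure_mono_null (Set.diff_subset_compl s _) h0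
  have hsplit : P s = P (s ∩ {x, y}) := by
    rw [← measure_inter_add_diff s hmeas, hdiff, add_zero]
  have hrhs : (P {x} • Measure.dirac x + P {y} • Measure.dirac y) s
      = P {x} * (if x ∈ s then 1 else 0) + P {y} * (if y ∈ s then 1 else 0) := by
    simp [Measure.dirac_apply' _ hs, Set.indicator_apply, smul_eq_mul]
  rw [hrhs, hsplit]
  by_cases hx : x ∈ s <;> by_cases hy : y ∈ s
  · have hseq : s ∩ {x, y} = {x, y} := by
      apply Set.inter_eq_self_of_subset_right
      intro q hq; rcases hq with rfl | rfl
      · exact hx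
      · exact hy
    rw [hseq]
    have hdisj : Disjoint ({x} : Set ℝ) {y} := by
      simp [Set.disjoint_singleton, hxy]
    have hun : ({x, y} : Set ℝ) = {x} ∪ {y} := by rfl
    rw [hun, measure_union hdisj (measurableSet_singleton y)]
    simp [hx, hy]
  · have hseq : s ∩ {x, y} = {x} := by
      ext q; simp only [Set.mem_inter_iff, Set.mem_insert_iff, Set.mem_singleton_iff]
      constructor
      · rintro ⟨hqs, rfl | rfl⟩
        · rfl
        · exact absurd hqs hy
      · rintro rfl; exact ⟨hx, Or.inl rfl⟩
    rw [hseq]; simp [hx, hy]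
  · have hseq : s ∩ {x, y} = {y} := by
      ext q; simp only [Set.mem_inter_iff, Set.mem_insert_iff, Set.mem_singleton_iff]
      constructor
      · rintro ⟨hqs, rfl | rfl⟩
        · exact absurd hqs hx
        · rfl
      · rintro rfl; exact ⟨hy, Or.inr rfl⟩
    rw [hseq]; simp [hx, hy]
  · have hseq : s ∩ {x, y} = ∅ := by
      ext q; simp only [Set.mem_inter_iff, Set.mem_insert_iff, Set.mem_singleton_iff,
        Set.mem_empty_iff_false, iff_false]
      rintro ⟨hqs, rfl | rfl⟩
      · exact hx hqs
      · exact hy hqs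
    rw [hseq]; simp [hx, hy]

/-- Equality case of the Popoviciu variance bound: if the standard deviation of
a probability measure on [q_min, q_max] equals (q_max − q_min)/2, then the
measure is the equal mixture of the Dirac measures at the endpoints. -/
theorem std_eq_half_range_iff_two_point (P : Measure ℝ) [IsProbabilityMeasure P]
    (qmin qmax : ℝ) (hle : qmin ≤ qmax)
    (hsupp : P (Set.Icc qmin qmax) = 1)
    (heq : Real.sqrt ((∫ q, q ^ 2 ∂P) - (∫ q, q ∂P) ^ 2) = (qmax - qmin) / 2) :
    P = (1 / 2 : ENNReal) • Measure.dirac qmin +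
        (1 / 2 : ENNReal) • Measure.dirac qmax := by
  -- a.e. membership in the interval
  have hcompl : P (Set.Icc qmin qmax)ᶜ = 0 := by
    rw [measure_compl measurableSet_Icc (measure_ne_top _ _), hsupp, measure_univ]
    simp
  have hae : ∀ᵐ q ∂P, q ∈ Set.Icc qmin qmax := by
    rw [MeasureTheory.ae_iff]
    exact hcompl
  -- integrability
  set C : ℝ := max ‖qmin‖ ‖qmax‖ with hC
  have habs : ∀ᵐ q ∂P, ‖q‖ ≤ C := by
    filter_upwards [hae] with q hq
    exact abs_le_max_abs_abs hq.1 hq.2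
  have hI1 : Integrable (fun q : ℝ => q) P := by
    refine memLp_one_iff_integrable.mp ?_
    exact MemLp.of_bound measurable_id.aestronglyMeasurable C habs
  have hI2 : Integrable (fun q : ℝ => q ^ 2) P := by
    refine memLp_one_iff_integrable.mp ?_
    refine MemLp.of_bound (by measurability) (C ^ 2) ?_
    filter_upwards [habs] with q hq
    have h0 : (0:ℝ) ≤ ‖q‖ := norm_nonneg q
    calc ‖q ^ 2‖ = ‖q‖ ^ 2 := by rw [norm_pow]
      _ ≤ C ^ 2 := by nlinarith
  set μ : ℝ := ∫ q, q ∂P with hμdef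
  set S : ℝ := ∫ q, q ^ 2 ∂P with hSdef
  -- integral of a quadratic polynomial
  have hIlin : ∀ c₀ c₁ c₂ : ℝ,
      ∫ q, (c₂ * q ^ 2 + c₁ * q + c₀) ∂P = c₂ * S + c₁ * μ + c₀ := by
    intro c₀ c₁ c₂
    have hA : Integrable (fun q : ℝ => c₂ * q ^ 2) P := hI2.const_mul c₂
    have hB : Integrable (fun q : ℝ => c₁ * q) P := hI1.const_mul c₁
    have hAB : Integrable (fun q : ℝ => c₂ * q ^ 2 + c₁ * q) P := hA.add hB
    rw [integral_add hAB (integrable_const c₀), integral_add hA hB,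
      integral_const_mul, integral_const_mul, integral_const]
    simp [measure_univ, hμdef, hSdef]
  -- variance nonneg
  have hvar_nonneg : 0 ≤ S - μ ^ 2 := by
    have hexp : (fun q : ℝ => (q - μ) ^ 2)
        = fun q => (1 : ℝ) * q ^ 2 + (-(2 * μ)) * q + μ ^ 2 := by
      funext q; ring
    have hint : ∫ q, (q - μ) ^ 2 ∂P = S - μ ^ 2 := by
      rw [hexp, hIlin]; ring
    have h0 : 0 ≤ ∫ q, (q - μ) ^ 2 ∂P := integral_nonneg fun q => sq_nonneg _
    linarith [hint ▸ h0]
  have hvar : S - μ ^ 2 = ((qmax - qmin) / 2) ^ 2 := by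
    have h := Real.sq_sqrt hvar_nonneg
    rw [heq] at h
    linarith
  -- the quadratic function
  set f : ℝ → ℝ := fun q => (q - qmin) * (qmax - q) with hf
  have hfexp : f = fun q => (-1 : ℝ) * q ^ 2 + (qmin + qmax) * q + (-(qmin * qmax)) := by
    funext q; simp only [hf]; ring
  have hf_int : Integrable f P := by
    rw [hfexp]
    exact ((hI2.const_mul _).add (hI1.const_mul _)).add (integrable_const _)
  have hf_nonneg : 0 ≤ᵐ[P] f := by
    filter_upwards [hae] with q hq
    exact mul_nonneg (by linarith [hq.1]) (by linarith [hq.2])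
  have hf_val : ∫ q, f q ∂P = -S + (qmin + qmax) * μ - qmin * qmax := by
    rw [hfexp, hIlin]; ring
  have hf_ge0 : 0 ≤ ∫ q, f q ∂P := integral_nonneg_of_ae hf_nonneg
  -- mean is the midpoint
  have hmu : μ = (qmin + qmax) / 2 := by
    nlinarith [sq_nonneg (μ - (qmin + qmax) / 2), hf_ge0, hf_val, hvar]
  have hf_le0 : ∫ q, f q ∂P ≤ 0 := by
    rw [hf_val]; nlinarith [sq_nonneg (μ - (qmin + qmax) / 2)]
  have hf_zero : ∫ q, f q ∂P = 0 := le_antisymm hf_le0 hf_ge0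
  have hf_ae0 : f =ᵐ[P] 0 :=
    (integral_eq_zero_iff_of_nonneg_ae hf_nonneg hf_int).mp hf_zero
  have hmem : ∀ᵐ q ∂P, q ∈ ({qmin, qmax} : Set ℝ) := by
    filter_upwards [hf_ae0] with q hq
    have hz : (q - qmin) * (qmax - q) = 0 := hq
    simp only [Set.mem_insert_iff, Set.mem_singleton_iff]
    rcases mul_eq_zero.mp hz with h | h
    · left; linarith
    · right; linarith
  have hsupp2 : P ({qmin, qmax} : Set ℝ)ᶜ = 0 :=
    MeasureTheory.ae_iff.mp hmem
  rcases eq_or_lt_of_le hle with heqmm | hlt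
  · -- degenerate case qmin = qmax
    subst heqmm
    have hset : ({qmin, qmin} : Set ℝ) = {qmin} := by simp
    rw [hset] at hsupp2
    have h1 : P {qmin} = 1 := by
      have hc := measure_compl (measurableSet_singleton qmin) (measure_ne_top P {qmin})
      rw [hsupp2, measure_univ] at hc
      exact le_antisymm prob_le_one (tsub_eq_zero_iff_le.mp hc.symm)
    rw [prob_eq_dirac_of_singleton P qmin h1, ← add_smul, ENNReal.add_halves, one_smul]
  · -- nondegenerate case
    have hne : qmin ≠ qmax := ne_of_lt hlt
    have hPform := meas_eq_two_point P qmin qmax hne hsupp2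
    set a : ENNReal := P {qmin} with ha
    set b : ENNReal := P {qmax} with hb
    have hato : a ≠ ⊤ := measure_ne_top _ _
    have hbto : b ≠ ⊤ := measure_ne_top _ _
    have hab : a + b = 1 := by
      have hdisj : Disjoint ({qmin} : Set ℝ) {qmax} := by
        simp [Set.disjoint_singleton, hne]
      have hset : ({qmin, qmax} : Set ℝ) = {qmin} ∪ {qmax} := rfl
      have h1 : P ({qmin, qmax} : Set ℝ) = 1 := by
        have hc := measure_compl ((measurableSet_singleton qmax).insert qmin)
          (measure_ne_top P _)
        rw [hsupp2, measure_univ] at hc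
        exact le_antisymm prob_le_one (tsub_eq_zero_iff_le.mp hc.symm)
      rw [← h1, hset, measure_union hdisj (measurableSet_singleton qmax)]
    -- compute the mean using the two-point form
    have hmean : μ = a.toReal * qmin + b.toReal * qmax := by
      rw [hμdef, hPform]
      rw [integral_add_measure
        (Integrable.smul_measure ((integrable_const qmin).congr
          (ae_eq_dirac (fun q : ℝ => q)).symm) hato)
        (Integrable.smul_measure ((integrable_const qmax).congr
          (ae_eq_dirac (fun q : ℝ => q)).symm) hbto)]
      rw [integral_smul_measure, integral_smul_measure, integral_dirac, integral_dirac]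
      simp [smul_eq_mul]
    have habr : a.toReal + b.toReal = 1 := by
      have hc := congrArg ENNReal.toReal hab
      rw [ENNReal.toReal_add hato hbto] at hc
      simpa using hc
    have haval : a.toReal = 1 / 2 := by
      have hkey : a.toReal * qmin + b.toReal * qmax = (qmin + qmax) / 2 := by
        rw [← hmean, hmu]
      have hsub : qmin - qmax ≠ 0 := by intro h; exact hne (by linarith)
      have h2 : a.toReal * (qmin - qmax) = (1/2) * (qmin - qmax) := by
        linear_combination hkey - qmax * habr
      have h3 := mul_right_cancel₀ hsub h2
      linarith
    have hbval : b.toReal = 1 / 2 := by linarith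
    have ha2 : a = 1 / 2 := by
      rw [← ENNReal.ofReal_toReal hato, haval]
      rw [show ((1:ℝ)/2) = ((1:ENNReal)/2).toReal by simp]
      rw [ENNReal.ofReal_toReal (by simp)]
    have hb2 : b = 1 / 2 := by
      rw [← ENNReal.ofReal_toReal hbto, hbval]
      rw [show ((1:ℝ)/2) = ((1:ENNReal)/2).toReal by simp]
      rw [ENNReal.ofReal_toReal (by simp)]
    rw [hPform, ha2, hb2]
end

section
/- Consider the random energy model at β ≥ β_c = 2√(log 2). Assume the infinite-volume free energies exist with f(β) = −√(log 2) for β ≥ β_c (so f(β) = f(2β) when β ≥ β_c), and define f^{(2)}(β,λ) = −lim_N (βN)^{−1} E log Z_N^{(2)}(β,λ), a concave function of λ with f^{(2)}(β,0) = 2f(β). Then the right derivative satisfies −lim_{λ↓0} ∂f^{(2)}(β,λ)/∂λ ≥ 1; combined with the trivial bound that this derivative limit is at most 1 (since |R| ≤ 1), it equals 1. -/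
open Finset Filter MeasureTheory

/-- Spin value of a Boolean configuration entry. -/
noncomputable def spin (b : Bool) : ℝ := if b then 1 else -1

/-- Single-replica REM partition function for energies E. -/
noncomputable def remZ (N : ℕ) (β : ℝ) (E : (Fin N → Bool) → ℝ) : ℝ :=
  ∑ σ : Fin N → Bool, Real.exp (-β * E σ)

/-- Two-replica REM partition function with replica coupling λ. -/
noncomputable def remZ2 (N : ℕ) (β lam : ℝ) (E : (Fin N → Bool) → ℝ) : ℝ :=
  ∑ σ1 : Fin N → Bool, ∑ σ2 : Fin N → Bool,
    Real.exp (-β * E σ1 - β * E σ2 + β * lam * ∑ j, spin (σ1 j) * spin (σ2 j))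

lemma spin_mul_self (b : Bool) : spin b * spin b = 1 := by
  cases b <;> simp [spin]

lemma spin_mul_le (a b : Bool) : spin a * spin b ≤ 1 := by
  cases a <;> cases b <;> simp [spin]

lemma remZ_pos (N : ℕ) (β : ℝ) (E : (Fin N → Bool) → ℝ) : 0 < remZ N β E :=
  Finset.sum_pos (fun _ _ => Real.exp_pos _) Finset.univ_nonempty

lemma remZ2_pos (N : ℕ) (β lam : ℝ) (E : (Fin N → Bool) → ℝ) : 0 < remZ2 N β lam E :=
  Finset.sum_pos (fun _ _ => Finset.sum_pos (fun _ _ => Real.exp_pos _) Finset.univ_nonempty)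
    Finset.univ_nonempty

lemma le_remZ2 (N : ℕ) (β lam : ℝ) (E : (Fin N → Bool) → ℝ) :
    Real.exp (β * lam * N) * remZ N (2 * β) E ≤ remZ2 N β lam E := by
  rw [remZ, remZ2, Finset.mul_sum]
  apply Finset.sum_le_sum
  intro σ _
  calc Real.exp (β * lam * N) * Real.exp (-(2 * β) * E σ)
      = Real.exp (-β * E σ - β * E σ + β * lam * ∑ j, spin (σ j) * spin (σ j)) := by
        rw [← Real.exp_add]
        congr 1
        have h : ∑ j : Fin N, spin (σ j) * spin (σ j) = (N : ℝ) := by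
          simp [spin_mul_self]
        rw [h]; ring
    _ ≤ ∑ σ2, Real.exp (-β * E σ - β * E σ2 + β * lam * ∑ j, spin (σ j) * spin (σ2 j)) :=
        Finset.single_le_sum
          (f := fun σ2 => Real.exp (-β * E σ - β * E σ2 + β * lam * ∑ j, spin (σ j) * spin (σ2 j)))
          (fun i _ => (Real.exp_pos _).le) (Finset.mem_univ σ)

lemma remZ2_le (N : ℕ) (β lam : ℝ) (h : 0 ≤ β * lam) (E : (Fin N → Bool) → ℝ) :
    remZ2 N β lam E ≤ Real.exp (β * lam * N) * remZ2 N β 0 E := by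
  rw [remZ2, remZ2, Finset.mul_sum]
  refine Finset.sum_le_sum fun σ1 _ => ?_
  rw [Finset.mul_sum]
  refine Finset.sum_le_sum fun σ2 _ => ?_
  rw [← Real.exp_add]
  apply Real.exp_le_exp.mpr
  have hS : ∑ j, spin (σ1 j) * spin (σ2 j) ≤ (N : ℝ) := by
    calc ∑ j, spin (σ1 j) * spin (σ2 j) ≤ ∑ _j : Fin N, (1 : ℝ) :=
          Finset.sum_le_sum fun j _ => spin_mul_le _ _
      _ = N := by simp
  have h2 := mul_le_mul_of_nonneg_left hS h
  simp only [mul_zero, zero_mul]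
  nlinarith [h2]

/-- (B.22): for the REM at β ≥ β_c = 2√(log 2), the right derivative of the
two-replica free energy at λ = 0 satisfies −f^{(2)}'₊(β,0) = 1. -/
theorem rem_right_derivative_eq_one
    {Ω : Type*} [MeasurableSpace Ω] (μ : Measure Ω) [IsProbabilityMeasure μ]
    (En : (N : ℕ) → Ω → (Fin N → Bool) → ℝ)
    (β : ℝ) (hβ : 0 < β) (hβc : 2 * Real.sqrt (Real.log 2) ≤ β)
    (f2 : ℝ → ℝ) (hconc : ConcaveOn ℝ Set.univ f2)
    -- the single-system free energy at 2β exists and equals −√(log 2)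
    (hZ : Tendsto
      (fun N : ℕ => -(1 / (2 * β * N)) * ∫ ω, Real.log (remZ N (2 * β) (En N ω)) ∂μ)
      atTop (nhds (-Real.sqrt (Real.log 2))))
    -- the two-replica free energy exists for each λ
    (hf2 : ∀ lam : ℝ, Tendsto
      (fun N : ℕ => -(1 / (β * N)) * ∫ ω, Real.log (remZ2 N β lam (En N ω)) ∂μ)
      atTop (nhds (f2 lam)))
    -- f^{(2)}(β,0) = 2 f(β) = −2√(log 2)
    (hf20 : f2 0 = -(2 * Real.sqrt (Real.log 2)))
    (g : ℝ)
    (hg : Tendsto (fun lam : ℝ => (f2 lam - f2 0) / lam)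
      (nhdsWithin 0 (Set.Ioi 0)) (nhds g)) :
    -g = 1 := by
  have hlog2 : (0 : ℝ) < Real.sqrt (Real.log 2) :=
    Real.sqrt_pos.mpr (Real.log_pos one_lt_two)
  have hcpos : (0 : ℝ) < 2 * Real.sqrt (Real.log 2) := by linarith
  -- Key dichotomy: for every lam > 0, either f2 lam = 0 (junk integrals) or f2 lam = f2 0 - lam.
  have key : ∀ lam : ℝ, 0 < lam → f2 lam ≠ 0 → f2 lam = f2 0 - lam := by
    intro lam hlam hne
    have hsand : ∀ᶠ N : ℕ in atTop,
        ((-(1 / (β * N)) * ∫ ω, Real.log (remZ2 N β 0 (En N ω)) ∂μ) - lam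
          ≤ -(1 / (β * N)) * ∫ ω, Real.log (remZ2 N β lam (En N ω)) ∂μ)
        ∧ (-(1 / (β * N)) * ∫ ω, Real.log (remZ2 N β lam (En N ω)) ∂μ
          ≤ 2 * (-(1 / (2 * β * N)) * ∫ ω, Real.log (remZ N (2 * β) (En N ω)) ∂μ) - lam) := by
      have h0 := (hf2 0).eventually_ne (by rw [hf20]; exact neg_ne_zero.mpr hcpos.ne')
      have hZ' := hZ.eventually_ne (neg_ne_zero.mpr hlog2.ne')
      have hl := (hf2 lam).eventually_ne hne
      filter_upwards [h0, hZ', hl, eventually_ge_atTop 1] with N h0 hZne hlne hN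
      have hNpos : (0 : ℝ) < (N : ℝ) := by exact_mod_cast hN
      have hβN : (0 : ℝ) < β * N := mul_pos hβ hNpos
      have hI0 : Integrable (fun ω => Real.log (remZ2 N β 0 (En N ω))) μ := by
        by_contra h
        rw [integral_undef h, mul_zero] at h0
        exact h0 rfl
      have hIZ : Integrable (fun ω => Real.log (remZ N (2 * β) (En N ω))) μ := by
        by_contra h
        rw [integral_undef h, mul_zero] at hZne
        exact hZne rfl
      have hIl : Integrable (fun ω => Real.log (remZ2 N β lam (En N ω))) μ := by
        by_contra h
        rw [integral_undef h, mul_zero] at hlne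
        exact hlne rfl
      have hIc : Integrable (fun _ : Ω => β * lam * (N : ℝ)) μ := integrable_const _
      -- pointwise bounds
      have hup : ∀ ω, Real.log (remZ2 N β lam (En N ω))
          ≤ β * lam * (N : ℝ) + Real.log (remZ2 N β 0 (En N ω)) := by
        intro ω
        have h1 := remZ2_le N β lam (mul_nonneg hβ.le hlam.le) (En N ω)
        have h2 := Real.log_le_log (remZ2_pos N β lam (En N ω)) h1
        rwa [Real.log_mul (Real.exp_ne_zero _) (remZ2_pos N β 0 (En N ω)).ne',
          Real.log_exp] at h2
      have hlo : ∀ ω, β * lam * (N : ℝ) + Real.log (remZ N (2 * β) (En N ω))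
          ≤ Real.log (remZ2 N β lam (En N ω)) := by
        intro ω
        have h1 := le_remZ2 N β lam (En N ω)
        have h2 := Real.log_le_log
          (mul_pos (Real.exp_pos _) (remZ_pos N (2 * β) (En N ω))) h1
        rwa [Real.log_mul (Real.exp_ne_zero _) (remZ_pos N (2 * β) (En N ω)).ne',
          Real.log_exp] at h2
      have hA : ∫ ω, Real.log (remZ2 N β lam (En N ω)) ∂μ
          ≤ β * lam * (N : ℝ) + ∫ ω, Real.log (remZ2 N β 0 (En N ω)) ∂μ := by
        have h := integral_mono hIl (hIc.add hI0) hup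
        simp only [Pi.add_apply] at h
        rwa [integral_add hIc hI0, integral_const, probReal_univ,
          one_smul] at h
      have hB : β * lam * (N : ℝ) + ∫ ω, Real.log (remZ N (2 * β) (En N ω)) ∂μ
          ≤ ∫ ω, Real.log (remZ2 N β lam (En N ω)) ∂μ := by
        have h := integral_mono (hIc.add hIZ) hIl hlo
        simp only [Pi.add_apply] at h
        rwa [integral_add hIc hIZ, integral_const, probReal_univ,
          one_smul] at h
      have hNne : (N : ℝ) ≠ 0 := hNpos.ne'
      constructor
      · have h1 : (1 / (β * N)) * (∫ ω, Real.log (remZ2 N β lam (En N ω)) ∂μ)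
            ≤ (1 / (β * N)) * (β * lam * (N : ℝ) + ∫ ω, Real.log (remZ2 N β 0 (En N ω)) ∂μ) :=
          mul_le_mul_of_nonneg_left hA (by positivity)
        have h2 : (1 / (β * (N : ℝ))) * (β * lam * (N : ℝ)) = lam := by
          field_simp
        rw [mul_add, h2] at h1
        linarith
      · have h1 : (1 / (β * N)) * (β * lam * (N : ℝ) + ∫ ω, Real.log (remZ N (2 * β) (En N ω)) ∂μ)
            ≤ (1 / (β * N)) * (∫ ω, Real.log (remZ2 N β lam (En N ω)) ∂μ) :=
          mul_le_mul_of_nonneg_left hB (by positivity)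
        have h2 : (1 / (β * (N : ℝ))) * (β * lam * (N : ℝ)) = lam := by
          field_simp
        have h3 : 2 * (-(1 / (2 * β * (N : ℝ))) * (∫ ω, Real.log (remZ N (2 * β) (En N ω)) ∂μ))
            = -(1 / (β * (N : ℝ))) * (∫ ω, Real.log (remZ N (2 * β) (En N ω)) ∂μ) := by
          field_simp
        rw [mul_add, h2] at h1
        rw [h3]
        linarith
    have t0 : Tendsto (fun N : ℕ =>
        (-(1 / (β * N)) * ∫ ω, Real.log (remZ2 N β 0 (En N ω)) ∂μ) - lam) atTop
        (nhds (f2 0 - lam)) := (hf2 0).sub_const lam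
    have tZ : Tendsto (fun N : ℕ =>
        2 * (-(1 / (2 * β * N)) * ∫ ω, Real.log (remZ N (2 * β) (En N ω)) ∂μ) - lam) atTop
        (nhds (2 * (-Real.sqrt (Real.log 2)) - lam)) := (hZ.const_mul 2).sub_const lam
    have hle1 : f2 0 - lam ≤ f2 lam :=
      le_of_tendsto_of_tendsto t0 (hf2 lam) (hsand.mono fun N h => h.1)
    have hle2 : f2 lam ≤ 2 * (-Real.sqrt (Real.log 2)) - lam :=
      le_of_tendsto_of_tendsto (hf2 lam) tZ (hsand.mono fun N h => h.2)
    rw [hf20] at hle1 ⊢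
    linarith
  -- Now conclude g = -1.
  by_cases hcase : ∃ ε > (0 : ℝ), ∀ lam ∈ Set.Ioo (0 : ℝ) ε, f2 lam = 0
  · exfalso
    obtain ⟨ε, hε, h0⟩ := hcase
    have hmem : Set.Ioo (0 : ℝ) ε ∈ nhdsWithin (0 : ℝ) (Set.Ioi 0) :=
      Ioo_mem_nhdsGT_of_mem ⟨le_refl 0, hε⟩
    have heq : ∀ᶠ lam in nhdsWithin (0 : ℝ) (Set.Ioi 0),
        (2 * Real.sqrt (Real.log 2)) / lam = (f2 lam - f2 0) / lam := by
      filter_upwards [hmem] with lam hlam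
      rw [h0 lam hlam, hf20]
      ring
    have htop : Tendsto (fun lam : ℝ => (f2 lam - f2 0) / lam)
        (nhdsWithin (0 : ℝ) (Set.Ioi 0)) atTop := by
      have hbase : Tendsto (fun lam : ℝ => (2 * Real.sqrt (Real.log 2)) / lam)
          (nhdsWithin (0 : ℝ) (Set.Ioi 0)) atTop := by
        simpa [div_eq_mul_inv] using
          (tendsto_inv_nhdsGT_zero.const_mul_atTop hcpos)
      exact hbase.congr' heq
    exact not_tendsto_atTop_of_tendsto_nhds hg htop
  · push_neg at hcase
    have hfreq : ∃ᶠ lam in nhdsWithin (0 : ℝ) (Set.Ioi 0),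
        (f2 lam - f2 0) / lam = -1 := by
      rw [Filter.frequently_iff]
      intro U hU
      rw [mem_nhdsGT_iff_exists_Ioo_subset] at hU
      obtain ⟨u, hu, hsub⟩ := hU
      obtain ⟨lam, hlam, hne⟩ := hcase u hu
      refine ⟨lam, hsub hlam, ?_⟩
      have h := key lam hlam.1 hne
      rw [h]
      have hlne : lam ≠ 0 := hlam.1.ne'
      field_simp
      ring
    have h := tendsto_nhds_unique_of_frequently_eq hg tendsto_const_nhds hfreq
    linarith
end
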